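/- Let X, Y be separable Banach spaces with Y continuously and densely embedded in X. For M ≥ 0, α > 0, a ≥ 0, the set A_a = { z ∈ C([0,T]; (B_M^{X*}, w*)) : ‖z‖_{C^α([0,T]; Y*)} ≤ a } is compact in C([0,T]; (B_M^{X*}, w*)), where B_M^{X*} is the closed ball of radius M in X* with the weak-* topology. -/

import Mathlib

open Filter Topology

section Aux

variable {X Y : Type*} [NormedAddCommGroup X] [NormedSpace ℝ X]
    [NormedAddCommGroup Y] [NormedSpace ℝ Y]

/-- Key quantitative equicontinuity estimate: uniformly over all paths `g` satisfying the
`M`-bound and the `Y*`-Hölder estimate, evaluations at a fixed `φ` are eventually `ε`-close. -/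
lemma holder_eventually_aux (j : Y →L[ℝ] X) (hj_dense : DenseRange j)
    (T : ℝ) (M : ℝ) (hM : 0 ≤ M) (α : ℝ) (hα : 0 < α) (a : ℝ)
    (φ : X) (ε : ℝ) (hε : 0 < ε) (t₀ : Set.Icc (0:ℝ) T) :
    ∀ᶠ t in 𝓝 t₀, ∀ g : Set.Icc (0:ℝ) T → WeakDual ℝ X,
      (∀ s (ψ : X), |g s ψ| ≤ M * ‖ψ‖) →
      (∀ s t (y : Y), |g t (j y) - g s (j y)| ≤ a * |(t : ℝ) - (s : ℝ)| ^ α * ‖y‖) →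
      |g t φ - g t₀ φ| < ε := by
  obtain ⟨y, hy⟩ := hj_dense.exists_dist_lt φ (show (0:ℝ) < ε / (4 * (M + 1)) by positivity)
  have hd : ‖φ - j y‖ < ε / (4 * (M + 1)) := by
    rwa [dist_eq_norm] at hy
  have hMd : M * ‖φ - j y‖ < ε / 4 := by
    have h1 : M * ‖φ - j y‖ ≤ (M + 1) * ‖φ - j y‖ :=
      mul_le_mul_of_nonneg_right (by linarith) (norm_nonneg _)
    have h2 : (M + 1) * ‖φ - j y‖ < (M + 1) * (ε / (4 * (M + 1))) :=
      mul_lt_mul_of_pos_left hd (by linarith)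
    have h3 : (M + 1) * (ε / (4 * (M + 1))) = ε / 4 := by
      field_simp
    linarith
  -- the Hölder modulus tends to 0
  have h0 : Filter.Tendsto (fun t : Set.Icc (0:ℝ) T => a * |(t : ℝ) - (t₀ : ℝ)| ^ α * ‖y‖)
      (𝓝 t₀) (𝓝 0) := by
    have h1 : Filter.Tendsto (fun t : Set.Icc (0:ℝ) T => |(t : ℝ) - (t₀ : ℝ)|)
        (𝓝 t₀) (𝓝 0) := by
      have : Continuous (fun t : Set.Icc (0:ℝ) T => |(t : ℝ) - (t₀ : ℝ)|) :=
        (continuous_subtype_val.sub continuous_const).abs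
      simpa using this.tendsto t₀
    have h2 : ContinuousAt (fun r : ℝ => r ^ α) 0 :=
      Real.continuousAt_rpow_const 0 α (Or.inr hα.le)
    have h3 : Filter.Tendsto (fun t : Set.Icc (0:ℝ) T => |(t : ℝ) - (t₀ : ℝ)| ^ α)
        (𝓝 t₀) (𝓝 0) := by
      have := h2.tendsto.comp h1
      simpa [Real.zero_rpow hα.ne', Function.comp_def] using this
    have := (h3.const_mul a).mul_const ‖y‖
    simpa [mul_comm, mul_assoc, mul_left_comm] using this
  have hev := h0.eventually_lt_const (show (0:ℝ) < ε / 2 by positivity)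
  filter_upwards [hev] with t ht g hg1 hg2
  have e1 : |g t φ - g t (j y)| ≤ M * ‖φ - j y‖ := by
    have : g t φ - g t (j y) = g t (φ - j y) := (map_sub (g t) φ (j y)).symm
    rw [this]; exact hg1 t _
  have e2 : |g t₀ (j y) - g t₀ φ| ≤ M * ‖φ - j y‖ := by
    have : g t₀ (j y) - g t₀ φ = g t₀ (j y - φ) := (map_sub (g t₀) (j y) φ).symm
    rw [this]
    calc |g t₀ (j y - φ)| ≤ M * ‖j y - φ‖ := hg1 t₀ _
      _ = M * ‖φ - j y‖ := by rw [norm_sub_rev]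
  have e3 : |g t (j y) - g t₀ (j y)| ≤ a * |(t : ℝ) - (t₀ : ℝ)| ^ α * ‖y‖ := hg2 t₀ t y
  have split : |g t φ - g t₀ φ| ≤
      |g t φ - g t (j y)| + |g t (j y) - g t₀ (j y)| + |g t₀ (j y) - g t₀ φ| := by
    have : g t φ - g t₀ φ =
        (g t φ - g t (j y)) + (g t (j y) - g t₀ (j y)) + (g t₀ (j y) - g t₀ φ) := by ring
    rw [this]
    exact (abs_add_le _ _).trans (by gcongr; exact abs_add_le _ _)
  linarith

end Aux

/-- **Stochastic Aubin–Lions type compactness lemma.**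
Let `X, Y` be separable Banach spaces with `Y` continuously and densely embedded in `X`
(via `j : Y →L X`, injective with dense range). For `M ≥ 0`, `α > 0`, `a ≥ 0`,
the set of continuous paths `z : [0,T] → (X*, w*)` taking values in the closed ball of
radius `M` whose induced `Y*`-valued path is bounded by `a` and `α`-Hölder with constant
`a` is compact in `C([0,T]; (B_M^{X*}, w*))`, i.e. compact for the topology of uniform
weak-* convergence on `C([0,T]; (X*, w*))`. -/
theorem isCompact_holder_ball_paths
    {X Y : Type*} [NormedAddCommGroup X] [NormedSpace ℝ X]
    [NormedAddCommGroup Y] [NormedSpace ℝ Y]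
    [TopologicalSpace.SeparableSpace X] [TopologicalSpace.SeparableSpace Y]
    (j : Y →L[ℝ] X) (hj_inj : Function.Injective j) (hj_dense : DenseRange j)
    (T : ℝ) (hT : 0 < T) (M : ℝ) (hM : 0 ≤ M) (α : ℝ) (hα : 0 < α) (a : ℝ) (ha : 0 ≤ a) :
    IsCompact
      { z : C(Set.Icc (0:ℝ) T, WeakDual ℝ X) |
        (∀ t (φ : X), |z t φ| ≤ M * ‖φ‖) ∧
        (∀ t, ‖(WeakDual.toStrongDual (z t)).comp j‖ ≤ a) ∧
        (∀ s t : Set.Icc (0:ℝ) T,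
          ‖(WeakDual.toStrongDual (z t)).comp j - (WeakDual.toStrongDual (z s)).comp j‖
            ≤ a * |(t : ℝ) - (s : ℝ)| ^ α) } := by
  classical
  set S : Set C(Set.Icc (0:ℝ) T, WeakDual ℝ X) :=
    { z : C(Set.Icc (0:ℝ) T, WeakDual ℝ X) |
        (∀ t (φ : X), |z t φ| ≤ M * ‖φ‖) ∧
        (∀ t, ‖(WeakDual.toStrongDual (z t)).comp j‖ ≤ a) ∧
        (∀ s t : Set.Icc (0:ℝ) T,
          ‖(WeakDual.toStrongDual (z t)).comp j - (WeakDual.toStrongDual (z s)).comp j‖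
            ≤ a * |(t : ℝ) - (s : ℝ)| ^ α) } with hS_def
  -- pointwise Hölder estimate for members of `S`
  have hpt : ∀ z ∈ S, ∀ s t : Set.Icc (0:ℝ) T, ∀ y : Y,
      |z t (j y) - z s (j y)| ≤ a * |(t : ℝ) - (s : ℝ)| ^ α * ‖y‖ := by
    intro z hz s t y
    have h := (((WeakDual.toStrongDual (z t)).comp j
        - (WeakDual.toStrongDual (z s)).comp j).le_opNorm y)
    have h2 := hz.2.2 s t
    have happ : ((WeakDual.toStrongDual (z t)).comp j
        - (WeakDual.toStrongDual (z s)).comp j) y = z t (j y) - z s (j y) := rfl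
    rw [happ, Real.norm_eq_abs] at h
    calc |z t (j y) - z s (j y)|
        ≤ ‖(WeakDual.toStrongDual (z t)).comp j - (WeakDual.toStrongDual (z s)).comp j‖ * ‖y‖ := h
      _ ≤ a * |(t : ℝ) - (s : ℝ)| ^ α * ‖y‖ :=
          mul_le_mul_of_nonneg_right h2 (norm_nonneg _)
  have hpt2 : ∀ z ∈ S, ∀ t : Set.Icc (0:ℝ) T, ∀ y : Y, |z t (j y)| ≤ a * ‖y‖ := by
    intro z hz t y
    have h := ((WeakDual.toStrongDual (z t)).comp j).le_opNorm y
    have happ : ((WeakDual.toStrongDual (z t)).comp j) y = z t (j y) := rfl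
    rw [happ, Real.norm_eq_abs] at h
    exact h.trans (mul_le_mul_of_nonneg_right (hz.2.1 t) (norm_nonneg _))
  -- the corresponding set of bare functions
  set Tset : Set (Set.Icc (0:ℝ) T → WeakDual ℝ X) :=
    { g | (∀ t (φ : X), |g t φ| ≤ M * ‖φ‖) ∧
          (∀ s t : Set.Icc (0:ℝ) T, ∀ y : Y,
            |g t (j y) - g s (j y)| ≤ a * |(t : ℝ) - (s : ℝ)| ^ α * ‖y‖) ∧
          (∀ t : Set.Icc (0:ℝ) T, ∀ y : Y, |g t (j y)| ≤ a * ‖y‖) } with hT_def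
  have hImg : ContinuousMap.toFun '' S = Tset := by
    apply Set.Subset.antisymm
    · rintro f ⟨z, hz, rfl⟩
      exact ⟨hz.1, hpt z hz, hpt2 z hz⟩
    · intro g hg
      have hcont : Continuous g := by
        apply WeakDual.continuous_of_continuous_eval
        intro φ
        rw [continuous_iff_continuousAt]
        intro t₀
        rw [ContinuousAt, Metric.tendsto_nhds]
        intro ε hε
        filter_upwards [holder_eventually_aux j hj_dense T M hM α hα a φ ε hε t₀] with t ht
        rw [Real.dist_eq]
        exact ht g hg.1 hg.2.1
      refine ⟨⟨g, hcont⟩, ⟨hg.1, ?_, ?_⟩, rfl⟩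
      · intro t
        rw [ContinuousLinearMap.opNorm_le_iff ha]
        intro y
        simpa [Real.norm_eq_abs] using hg.2.2 t y
      · intro s t
        rw [ContinuousLinearMap.opNorm_le_iff (by positivity)]
        intro y
        have := hg.2.1 s t y
        simpa [Real.norm_eq_abs, mul_assoc] using this
  -- compactness of `Tset` (Banach-Alaoglu + closedness in the product topology)
  have hKcompact : IsCompact (WeakDual.toStrongDual ⁻¹' Metric.closedBall (0 : StrongDual ℝ X) M) :=
    WeakDual.isCompact_closedBall 0 M
  have hTsub : Tset ⊆ Set.univ.pi
      (fun _ : Set.Icc (0:ℝ) T =>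
        WeakDual.toStrongDual ⁻¹' Metric.closedBall (0 : StrongDual ℝ X) M) := by
    intro g hg t _
    simp only [Set.mem_preimage, Metric.mem_closedBall, dist_zero_right]
    rw [ContinuousLinearMap.opNorm_le_iff hM]
    intro φ
    simpa [Real.norm_eq_abs] using hg.1 t φ
  have hTclosed : IsClosed Tset := by
    have hev : ∀ (t : Set.Icc (0:ℝ) T) (φ : X),
        Continuous fun g : Set.Icc (0:ℝ) T → WeakDual ℝ X => g t φ :=
      fun t φ => (WeakDual.eval_continuous φ).comp (continuous_apply t)
    have h1 : IsClosed { g : Set.Icc (0:ℝ) T → WeakDual ℝ X |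
        ∀ t (φ : X), |g t φ| ≤ M * ‖φ‖ } := by
      rw [Set.setOf_forall]
      refine isClosed_iInter fun t => ?_
      rw [Set.setOf_forall]
      exact isClosed_iInter fun φ => isClosed_le (hev t φ).abs continuous_const
    have h2 : IsClosed { g : Set.Icc (0:ℝ) T → WeakDual ℝ X |
        ∀ s t : Set.Icc (0:ℝ) T, ∀ y : Y,
          |g t (j y) - g s (j y)| ≤ a * |(t : ℝ) - (s : ℝ)| ^ α * ‖y‖ } := by
      rw [Set.setOf_forall]
      refine isClosed_iInter fun s => ?_
      rw [Set.setOf_forall]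
      refine isClosed_iInter fun t => ?_
      rw [Set.setOf_forall]
      exact isClosed_iInter fun y =>
        isClosed_le ((hev t (j y)).sub (hev s (j y))).abs continuous_const
    have h3 : IsClosed { g : Set.Icc (0:ℝ) T → WeakDual ℝ X |
        ∀ t : Set.Icc (0:ℝ) T, ∀ y : Y, |g t (j y)| ≤ a * ‖y‖ } := by
      rw [Set.setOf_forall]
      refine isClosed_iInter fun t => ?_
      rw [Set.setOf_forall]
      exact isClosed_iInter fun y => isClosed_le (hev t (j y)).abs continuous_const
    have : Tset = _ ∩ (_ ∩ _) := rfl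
    exact (h1.inter (h2.inter h3))
  have hTcompact : IsCompact Tset :=
    ((isCompact_univ_pi fun _ => hKcompact).of_isClosed_subset hTclosed hTsub)
  -- set up the uniform structure on the weak dual
  letI : UniformSpace (WeakDual ℝ X) := IsTopologicalAddGroup.rightUniformSpace _
  haveI : IsUniformAddGroup (WeakDual ℝ X) := isUniformAddGroup_of_addCommGroup
  apply ArzelaAscoli.isCompact_of_equicontinuous
  · rw [hImg]; exact hTcompact
  · -- equicontinuity
    intro t₀ U hU
    rw [uniformity_eq_comap_nhds_zero] at hU
    obtain ⟨V, hV, hVU⟩ := hU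
    -- neighbourhoods of 0 in the weak-* topology come from the product topology
    have hnhds : (𝓝 (0 : WeakDual ℝ X)) =
        Filter.comap (fun (f : WeakDual ℝ X) (φ : X) => f φ) (𝓝 (0 : X → ℝ)) := by
      exact nhds_induced _ _
    rw [hnhds] at hV
    obtain ⟨W, hW, hWV⟩ := hV
    rw [nhds_pi, Filter.mem_pi] at hW
    obtain ⟨I, hIfin, u, hu, husub⟩ := hW
    choose ε hεpos hball using fun φ => Metric.mem_nhds_iff.1 (hu φ)
    have hev : ∀ᶠ t in 𝓝 t₀, ∀ φ ∈ I, ∀ g : Set.Icc (0:ℝ) T → WeakDual ℝ X,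
        (∀ s (ψ : X), |g s ψ| ≤ M * ‖ψ‖) →
        (∀ s t (y : Y), |g t (j y) - g s (j y)| ≤ a * |(t : ℝ) - (s : ℝ)| ^ α * ‖y‖) →
        |g t φ - g t₀ φ| < ε φ := by
      rw [hIfin.eventually_all]
      intro φ _
      exact holder_eventually_aux j hj_dense T M hM α hα a φ (ε φ) (hεpos φ) t₀
    filter_upwards [hev] with t ht z
    apply hVU
    apply hWV
    apply husub
    intro φ hφ
    apply hball φ
    have hz := z.2
    have := ht φ hφ (⇑(z : C(Set.Icc (0:ℝ) T, WeakDual ℝ X))) hz.1 (hpt _ hz)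
    simpa [Metric.mem_ball, Real.dist_eq] using (show |((⇑(z : C(Set.Icc (0:ℝ) T, WeakDual ℝ X))) t - (⇑(z : C(Set.Icc (0:ℝ) T, WeakDual ℝ X))) t₀) φ| < ε φ from this)
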